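/- Let 𝔤 be a finite-dimensional real Lie algebra and 𝔤* its dual space. For F ∈ C^∞(𝔤*) and ξ ∈ 𝔤*, let dF(ξ) ∈ 𝔤 denote the element corresponding to the Fréchet derivative DF(ξ) ∈ (𝔤*)* under the canonical isomorphism 𝔤 ≅ 𝔤**. Then the bracket {F,G}(ξ) := ⟨ξ, [dF(ξ), dG(ξ)]⟩ makes C^∞(𝔤*), with pointwise multiplication, a Poisson algebra: it is ℝ-bilinear, antisymmetric, satisfies the Jacobi identity, and is a derivation in each argument. -/

import Mathlib

section LPaux
variable {𝔤 : Type*} [NormedAddCommGroup 𝔤] [NormedSpace ℝ 𝔤] [FiniteDimensional ℝ 𝔤]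

/-- continuous bilinear version of a bilinear map. -/
noncomputable def LPLc (lie : 𝔤 →ₗ[ℝ] 𝔤 →ₗ[ℝ] 𝔤) : 𝔤 →L[ℝ] 𝔤 →L[ℝ] 𝔤 :=
  LinearMap.toContinuousLinearMap
    { toFun := fun x => LinearMap.toContinuousLinearMap (lie x)
      map_add' := by intro x y; ext z; simp
      map_smul' := by intro c x; ext z; simp }

/-- canonical equivalence with the double (continuous) dual. -/
noncomputable def LPee : 𝔤 ≃L[ℝ] ((𝔤 →L[ℝ] ℝ) →L[ℝ] ℝ) := by
  have hinj : Function.Injective ((ContinuousLinearMap.apply ℝ ℝ : 𝔤 →L[ℝ] _)) := by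
    intro x y hxy
    by_contra hne
    obtain ⟨f, hf⟩ := SeparatingDual.exists_separating_of_ne (R := ℝ) hne
    exact hf (congrArg (fun g => g f) hxy)
  have h1 : Module.finrank ℝ 𝔤 = Module.finrank ℝ ((𝔤 →L[ℝ] ℝ) →L[ℝ] ℝ) := by
    have e1 : (𝔤 →L[ℝ] ℝ) ≃ₗ[ℝ] (𝔤 →ₗ[ℝ] ℝ) := (LinearMap.toContinuousLinearMap).symm
    have e2 : ((𝔤 →L[ℝ] ℝ) →L[ℝ] ℝ) ≃ₗ[ℝ] ((𝔤 →L[ℝ] ℝ) →ₗ[ℝ] ℝ) :=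
      (LinearMap.toContinuousLinearMap).symm
    rw [e2.finrank_eq, Module.finrank_linearMap_self, e1.finrank_eq,
      Module.finrank_linearMap_self]
  have hsurj := (LinearMap.injective_iff_surjective_of_finrank_eq_finrank h1).mp hinj
  exact (LinearEquiv.ofBijective (ContinuousLinearMap.apply ℝ ℝ : 𝔤 →L[ℝ] _).toLinearMap
    ⟨hinj, hsurj⟩).toContinuousLinearEquiv

lemma LPee_apply (x : 𝔤) (φ : 𝔤 →L[ℝ] ℝ) : LPee (𝔤 := 𝔤) x φ = φ x := rfl

lemma LPee_symm_eval (X : (𝔤 →L[ℝ] ℝ) →L[ℝ] ℝ) (φ : 𝔤 →L[ℝ] ℝ) :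
    φ ((LPee (𝔤 := 𝔤)).symm X) = X φ := by
  conv_rhs => rw [← (LPee (𝔤 := 𝔤)).apply_symm_apply X]
  rfl

lemma LPLc_apply (lie :  𝔤 →ₗ[ℝ] 𝔤 →ₗ[ℝ] 𝔤) (x y : 𝔤) : LPLc lie x y = lie x y := rfl

variable (lie : 𝔤 →ₗ[ℝ] 𝔤 →ₗ[ℝ] 𝔤)
  (d : (((𝔤 →L[ℝ] ℝ)) → ℝ) → (𝔤 →L[ℝ] ℝ) → 𝔤)
  (hd : ∀ (F : (𝔤 →L[ℝ] ℝ) → ℝ) (ξ φ : 𝔤 →L[ℝ] ℝ), fderiv ℝ F ξ φ = φ (d F ξ))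

include hd

lemma LP_d_eq (F : (𝔤 →L[ℝ] ℝ) → ℝ) (ξ : 𝔤 →L[ℝ] ℝ) :
    d F ξ = (LPee (𝔤 := 𝔤)).symm (fderiv ℝ F ξ) := by
  have h : LPee (𝔤 := 𝔤) (d F ξ) = fderiv ℝ F ξ := by
    ext φ; rw [LPee_apply, hd]
  rw [← h, ContinuousLinearEquiv.symm_apply_apply]

lemma LP_hasFDeriv (G : (𝔤 →L[ℝ] ℝ) → ℝ) (hG : ContDiff ℝ (⊤ : ℕ∞) G) (ξ : 𝔤 →L[ℝ] ℝ) :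
    HasFDerivAt (fun η => d G η)
      (((LPee (𝔤 := 𝔤)).symm : ((𝔤 →L[ℝ] ℝ) →L[ℝ] ℝ) →L[ℝ] 𝔤).comp
        (fderiv ℝ (fderiv ℝ G) ξ)) ξ := by
  have h2 : ContDiff ℝ (⊤ : ℕ∞) (fderiv ℝ G) := hG.fderiv_right (by simp)
  have h3 :=
    (h2.differentiable (by simp) ξ).hasFDerivAt
  have h4 := (((LPee (𝔤 := 𝔤)).symm :
      ((𝔤 →L[ℝ] ℝ) →L[ℝ] ℝ) →L[ℝ] 𝔤).hasFDerivAt (x := fderiv ℝ G ξ)).comp ξ h3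
  have : (fun η => d G η) = fun η => (LPee (𝔤 := 𝔤)).symm (fderiv ℝ G η) := by
    funext η; exact LP_d_eq d hd G η
  rw [this]
  exact h4

lemma LP_key (F G H : (𝔤 →L[ℝ] ℝ) → ℝ) (hG : ContDiff ℝ (⊤ : ℕ∞) G)
    (hH : ContDiff ℝ (⊤ : ℕ∞) H) (ξ φ : 𝔤 →L[ℝ] ℝ) :
    φ (d (fun η => η (lie (d G η) (d H η))) ξ)
      = φ (lie (d G ξ) (d H ξ))
        + ξ (lie ((LPee (𝔤 := 𝔤)).symm (fderiv ℝ (fderiv ℝ G) ξ φ)) (d H ξ))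
        + ξ (lie (d G ξ) ((LPee (𝔤 := 𝔤)).symm (fderiv ℝ (fderiv ℝ H) ξ φ))) := by
  set L := LPLc lie with hL
  set DG := ((LPee (𝔤 := 𝔤)).symm : ((𝔤 →L[ℝ] ℝ) →L[ℝ] ℝ) →L[ℝ] 𝔤).comp
      (fderiv ℝ (fderiv ℝ G) ξ) with hDG
  set DH := ((LPee (𝔤 := 𝔤)).symm : ((𝔤 →L[ℝ] ℝ) →L[ℝ] ℝ) →L[ℝ] 𝔤).comp
      (fderiv ℝ (fderiv ℝ H) ξ) with hDH
  have hu1 : HasFDerivAt (fun η => L (d G η)) (L.comp DG) ξ :=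
    (L.hasFDerivAt).comp ξ (LP_hasFDeriv d hd G hG ξ)
  have hu : HasFDerivAt (fun η => L (d G η) (d H η))
      ((L (d G ξ)).comp DH + (L.comp DG).flip (d H ξ)) ξ :=
    hu1.clm_apply (LP_hasFDeriv d hd H hH ξ)
  have hK : HasFDerivAt (fun η => η (L (d G η) (d H η)))
      (ξ.comp ((L (d G ξ)).comp DH + (L.comp DG).flip (d H ξ))
        + (ContinuousLinearMap.id ℝ (𝔤 →L[ℝ] ℝ)).flip (L (d G ξ) (d H ξ))) ξ :=
    (hasFDerivAt_id ξ).clm_apply hu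
  have hKf := hK.fderiv
  have hfun : (fun η : 𝔤 →L[ℝ] ℝ => η (lie (d G η) (d H η))) = (fun η => η (L (d G η) (d H η))) := rfl
  rw [← hd, hfun, hKf]
  simp only [hL, hDG, hDH, LPLc_apply, ContinuousLinearMap.comp_apply,
    ContinuousLinearMap.add_apply, ContinuousLinearMap.flip_apply,
    ContinuousLinearMap.id_apply,
    ContinuousLinearMap.coe_comp', Function.comp_apply, ContinuousLinearMap.coe_coe, ContinuousLinearEquiv.coe_coe, map_add]
  ring

end LPaux


/-- Let `𝔤` be a finite-dimensional real Lie algebra (given here by a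
bilinear bracket `lie` that is antisymmetric and satisfies the Jacobi identity, on a
finite-dimensional normed space so that Fréchet derivatives make sense), and let `𝔤*` be
its (continuous) dual.  For `F : 𝔤* → ℝ` let `d F ξ ∈ 𝔤` be the element corresponding to
the Fréchet derivative `DF(ξ) ∈ 𝔤**` under the canonical isomorphism `𝔤 ≅ 𝔤**`, i.e.
`DF(ξ)(φ) = φ (d F ξ)` for all `φ ∈ 𝔤*`.  Then the Lie–Poisson bracket
`{F,G}(ξ) := ⟨ξ, [dF(ξ), dG(ξ)]⟩` on smooth functions on `𝔤*` is ℝ-bilinear,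
antisymmetric, satisfies the Jacobi identity, and is a derivation in each argument. -/
theorem lie_poisson_bracket_poisson
    {𝔤 : Type*} [NormedAddCommGroup 𝔤] [NormedSpace ℝ 𝔤] [FiniteDimensional ℝ 𝔤]
    (lie : 𝔤 →ₗ[ℝ] 𝔤 →ₗ[ℝ] 𝔤)
    (hanti : ∀ x y : 𝔤, lie x y = -lie y x)
    (hjac : ∀ x y z : 𝔤, lie x (lie y z) + lie y (lie z x) + lie z (lie x y) = 0)
    (d : (((𝔤 →L[ℝ] ℝ)) → ℝ) → (𝔤 →L[ℝ] ℝ) → 𝔤)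
    (hd : ∀ (F : (𝔤 →L[ℝ] ℝ) → ℝ) (ξ φ : 𝔤 →L[ℝ] ℝ), fderiv ℝ F ξ φ = φ (d F ξ)) :
    (∀ F F' G : (𝔤 →L[ℝ] ℝ) → ℝ,
       ContDiff ℝ (⊤ : ℕ∞) F → ContDiff ℝ (⊤ : ℕ∞) F' → ContDiff ℝ (⊤ : ℕ∞) G →
       ∀ ξ : 𝔤 →L[ℝ] ℝ, ξ (lie (d (fun η => F η + F' η) ξ) (d G ξ))
           = ξ (lie (d F ξ) (d G ξ)) + ξ (lie (d F' ξ) (d G ξ))) ∧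
    (∀ (c : ℝ) (F G : (𝔤 →L[ℝ] ℝ) → ℝ),
       ContDiff ℝ (⊤ : ℕ∞) F → ContDiff ℝ (⊤ : ℕ∞) G →
       ∀ ξ : 𝔤 →L[ℝ] ℝ, ξ (lie (d (fun η => c * F η) ξ) (d G ξ)) = c * ξ (lie (d F ξ) (d G ξ))) ∧
    (∀ F G G' : (𝔤 →L[ℝ] ℝ) → ℝ,
       ContDiff ℝ (⊤ : ℕ∞) F → ContDiff ℝ (⊤ : ℕ∞) G → ContDiff ℝ (⊤ : ℕ∞) G' →
       ∀ ξ : 𝔤 →L[ℝ] ℝ, ξ (lie (d F ξ) (d (fun η => G η + G' η) ξ))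
           = ξ (lie (d F ξ) (d G ξ)) + ξ (lie (d F ξ) (d G' ξ))) ∧
    (∀ (c : ℝ) (F G : (𝔤 →L[ℝ] ℝ) → ℝ),
       ContDiff ℝ (⊤ : ℕ∞) F → ContDiff ℝ (⊤ : ℕ∞) G →
       ∀ ξ : 𝔤 →L[ℝ] ℝ, ξ (lie (d F ξ) (d (fun η => c * G η) ξ)) = c * ξ (lie (d F ξ) (d G ξ))) ∧
    (∀ F G : (𝔤 →L[ℝ] ℝ) → ℝ,
       ContDiff ℝ (⊤ : ℕ∞) F → ContDiff ℝ (⊤ : ℕ∞) G →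
       ∀ ξ : 𝔤 →L[ℝ] ℝ, ξ (lie (d F ξ) (d G ξ)) = -ξ (lie (d G ξ) (d F ξ))) ∧
    (∀ F G H : (𝔤 →L[ℝ] ℝ) → ℝ,
       ContDiff ℝ (⊤ : ℕ∞) F → ContDiff ℝ (⊤ : ℕ∞) G → ContDiff ℝ (⊤ : ℕ∞) H →
       ∀ ξ : 𝔤 →L[ℝ] ℝ, ξ (lie (d F ξ) (d (fun η => η (lie (d G η) (d H η))) ξ))
           + ξ (lie (d G ξ) (d (fun η => η (lie (d H η) (d F η))) ξ))
           + ξ (lie (d H ξ) (d (fun η => η (lie (d F η) (d G η))) ξ)) = 0) ∧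
    (∀ F G H : (𝔤 →L[ℝ] ℝ) → ℝ,
       ContDiff ℝ (⊤ : ℕ∞) F → ContDiff ℝ (⊤ : ℕ∞) G → ContDiff ℝ (⊤ : ℕ∞) H →
       ∀ ξ : 𝔤 →L[ℝ] ℝ, ξ (lie (d F ξ) (d (fun η => G η * H η) ξ))
           = ξ (lie (d F ξ) (d G ξ)) * H ξ + G ξ * ξ (lie (d F ξ) (d H ξ))) := by
  have sep : ∀ x y : 𝔤, (∀ φ : 𝔤 →L[ℝ] ℝ, φ x = φ y) → x = y := by
    intro x y h
    by_contra hne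
    obtain ⟨f, hf⟩ := SeparatingDual.exists_separating_of_ne (R := ℝ) hne
    exact hf (h f)
  have hdiffat : ∀ (F : (𝔤 →L[ℝ] ℝ) → ℝ), ContDiff ℝ (⊤ : ℕ∞) F →
      ∀ ξ : 𝔤 →L[ℝ] ℝ, DifferentiableAt ℝ F ξ := fun F hF ξ =>
    (hF.differentiable (by simp)).differentiableAt
  have dadd : ∀ F F' : (𝔤 →L[ℝ] ℝ) → ℝ, ContDiff ℝ (⊤ : ℕ∞) F → ContDiff ℝ (⊤ : ℕ∞) F' →
      ∀ ξ, d (fun η => F η + F' η) ξ = d F ξ + d F' ξ := by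
    intro F F' hF hF' ξ
    apply sep; intro φ
    rw [← hd, fderiv_fun_add (hdiffat F hF ξ) (hdiffat F' hF' ξ),
      ContinuousLinearMap.add_apply, hd, hd, map_add]
  have dsmul : ∀ (c : ℝ) (F : (𝔤 →L[ℝ] ℝ) → ℝ), ContDiff ℝ (⊤ : ℕ∞) F →
      ∀ ξ, d (fun η => c * F η) ξ = c • d F ξ := by
    intro c F hF ξ
    apply sep; intro φ
    rw [← hd, fderiv_const_mul (hdiffat F hF ξ), ContinuousLinearMap.smul_apply, hd,
      map_smul, smul_eq_mul]
  have dmul : ∀ F G : (𝔤 →L[ℝ] ℝ) → ℝ, ContDiff ℝ (⊤ : ℕ∞) F → ContDiff ℝ (⊤ : ℕ∞) G →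
      ∀ ξ, d (fun η => F η * G η) ξ = F ξ • d G ξ + G ξ • d F ξ := by
    intro F G hF hG ξ
    apply sep; intro φ
    rw [← hd, fderiv_fun_mul (hdiffat F hF ξ) (hdiffat G hG ξ)]
    simp only [ContinuousLinearMap.add_apply, ContinuousLinearMap.smul_apply, hd,
      map_add, map_smul, smul_eq_mul]
  refine ⟨?_, ?_, ?_, ?_, ?_, ?_, ?_⟩
  · intro F F' G hF hF' hG ξ
    rw [dadd F F' hF hF' ξ, map_add, LinearMap.add_apply, map_add]
  · intro c F G hF hG ξ
    rw [dsmul c F hF ξ, map_smul, LinearMap.smul_apply, map_smul, smul_eq_mul]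
  · intro F G G' hF hG hG' ξ
    rw [dadd G G' hG hG' ξ, map_add, map_add]
  · intro c F G hF hG ξ
    rw [dsmul c G hG ξ, map_smul, map_smul, smul_eq_mul]
  · intro F G hF hG ξ
    rw [hanti (d F ξ) (d G ξ), map_neg]
  · -- Jacobi identity
    intro F G H hF hG hH ξ
    set ψ : (((𝔤 →L[ℝ] ℝ)) → ℝ) → (𝔤 →L[ℝ] ℝ) → (𝔤 →L[ℝ] ℝ) :=
      fun F ξ => LinearMap.toContinuousLinearMap
        ((ξ : 𝔤 →ₗ[ℝ] ℝ).comp (lie (d F ξ))) with hψdef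
    have hψ : ∀ (F : ((𝔤 →L[ℝ] ℝ)) → ℝ) (ξ y), ψ F ξ y = ξ (lie (d F ξ) y) := fun _ _ _ => rfl
    have hsymm : ∀ (G : ((𝔤 →L[ℝ] ℝ)) → ℝ), ContDiff ℝ (⊤ : ℕ∞) G →
        ∀ (ξ a b : 𝔤 →L[ℝ] ℝ),
        fderiv ℝ (fderiv ℝ G) ξ a b = fderiv ℝ (fderiv ℝ G) ξ b a := by
      intro G hG ξ a b
      exact hG.contDiffAt.isSymmSndFDerivAt (by rw [minSmoothness_of_isRCLikeNormedField]; exact WithTop.coe_le_coe.mpr (le_top : (2 : ℕ∞) ≤ ⊤)) a b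
    have term : ∀ F G H : (((𝔤 →L[ℝ] ℝ)) → ℝ), ContDiff ℝ (⊤ : ℕ∞) G →
        ContDiff ℝ (⊤ : ℕ∞) H → ∀ ξ : 𝔤 →L[ℝ] ℝ,
        ξ (lie (d F ξ) (d (fun η => η (lie (d G η) (d H η))) ξ))
          = ξ (lie (d F ξ) (lie (d G ξ) (d H ξ)))
            - fderiv ℝ (fderiv ℝ G) ξ (ψ F ξ) (ψ H ξ)
            + fderiv ℝ (fderiv ℝ H) ξ (ψ F ξ) (ψ G ξ) := by
      intro F G H hG hH ξ
      have h0 : ξ (lie (d F ξ) (d (fun η => η (lie (d G η) (d H η))) ξ))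
          = ψ F ξ (d (fun η => η (lie (d G η) (d H η))) ξ) := rfl
      rw [h0, LP_key lie d hd F G H hG hH ξ (ψ F ξ)]
      have h2 : ξ (lie (LPee.symm (fderiv ℝ (fderiv ℝ G) ξ (ψ F ξ))) (d H ξ))
          = -(fderiv ℝ (fderiv ℝ G) ξ (ψ F ξ)) (ψ H ξ) := by
        rw [hanti, map_neg]
        rw [show ξ (lie (d H ξ) (LPee.symm (fderiv ℝ (fderiv ℝ G) ξ (ψ F ξ))))
            = ψ H ξ (LPee.symm (fderiv ℝ (fderiv ℝ G) ξ (ψ F ξ))) from rfl,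
          LPee_symm_eval]
      have h3 : ξ (lie (d G ξ) (LPee.symm (fderiv ℝ (fderiv ℝ H) ξ (ψ F ξ))))
          = (fderiv ℝ (fderiv ℝ H) ξ (ψ F ξ)) (ψ G ξ) := by
        rw [show ξ (lie (d G ξ) (LPee.symm (fderiv ℝ (fderiv ℝ H) ξ (ψ F ξ))))
            = ψ G ξ (LPee.symm (fderiv ℝ (fderiv ℝ H) ξ (ψ F ξ))) from rfl,
          LPee_symm_eval]
      rw [h2, h3, hψ]
      ring
    rw [term F G H hG hH ξ, term G H F hH hF ξ, term H F G hF hG ξ]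
    have hsum : ξ (lie (d F ξ) (lie (d G ξ) (d H ξ)))
        + ξ (lie (d G ξ) (lie (d H ξ) (d F ξ)))
        + ξ (lie (d H ξ) (lie (d F ξ) (d G ξ))) = 0 := by
      rw [← map_add, ← map_add, hjac, map_zero]
    have s1 := hsymm G hG ξ (ψ F ξ) (ψ H ξ)
    have s2 := hsymm H hH ξ (ψ F ξ) (ψ G ξ)
    have s3 := hsymm F hF ξ (ψ G ξ) (ψ H ξ)
    linarith
  · intro F G H hF hG hH ξ
    rw [dmul G H hG hH ξ]
    simp only [map_add, map_smul, smul_eq_mul]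
    ring
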